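/- Let M ≥ 1, let 0 = x₀ < ⋯ < x_M = 1 be a partition of [0,1], T > 0, and for each cell i ∈ {0,…,M−1} let ρᵢ, vᵢ : [0,T] × [xᵢ, xᵢ₊₁] → ℝ be continuously differentiable. Assume the boundary conditions v₀(t, 0) = 0 and v_{M−1}(t, 1) = 0 for all t ∈ [0,T], and assume that for every t ∈ [0,T] the DG mass equation tested with the constant function 1 holds: Σᵢ ∫_{xᵢ}^{xᵢ₊₁} [ ∂ₜρᵢ(t,x) + ∂ₓ(ρᵢvᵢ)(t,x) ] dx = Σ_{j=1}^{M−1} [ρv]ⱼ(t), where [ρv]ⱼ(t) := (ρ_{j−1}v_{j−1})(t, xⱼ) − (ρⱼvⱼ)(t, xⱼ). Then the total discrete mass t ↦ Σᵢ ∫_{xᵢ}^{xᵢ₊₁} ρᵢ(t,x) dx is constant on [0,T]. -/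

import Mathlib

open Set MeasureTheory

/-- Time partial derivative of a function `f t x` of time and one space variable. -/
noncomputable def pt (f : ℝ → ℝ → ℝ) (t x : ℝ) : ℝ := deriv (fun s => f s x) t

/-- Space partial derivative of a function `f t x` of time and one space variable. -/
noncomputable def px (f : ℝ → ℝ → ℝ) (t x : ℝ) : ℝ := deriv (fun y => f t y) x

section Aux

variable {f : ℝ → ℝ → ℝ}

lemma aux_hasDerivAt_pt (hf : ContDiff ℝ 1 (fun z : ℝ × ℝ => f z.1 z.2)) (t y : ℝ) :
    HasDerivAt (fun s => f s y) (fderiv ℝ (fun z : ℝ × ℝ => f z.1 z.2) (t, y) (1, 0)) t := by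
  have h1 : HasFDerivAt (fun z : ℝ × ℝ => f z.1 z.2)
      (fderiv ℝ (fun z : ℝ × ℝ => f z.1 z.2) (t, y)) (t, y) :=
    (hf.differentiable one_ne_zero (t, y)).hasFDerivAt
  have h2 : HasDerivAt (fun s : ℝ => (s, y)) ((1 : ℝ), (0 : ℝ)) t :=
    (hasDerivAt_id t).prodMk (hasDerivAt_const t y)
  exact h1.comp_hasDerivAt t h2

lemma aux_pt_eq (hf : ContDiff ℝ 1 (fun z : ℝ × ℝ => f z.1 z.2)) (t y : ℝ) :
    pt f t y = fderiv ℝ (fun z : ℝ × ℝ => f z.1 z.2) (t, y) (1, 0) :=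
  (aux_hasDerivAt_pt hf t y).deriv

lemma aux_pt_cont (hf : ContDiff ℝ 1 (fun z : ℝ × ℝ => f z.1 z.2)) :
    Continuous (fun z : ℝ × ℝ => pt f z.1 z.2) := by
  have : (fun z : ℝ × ℝ => pt f z.1 z.2)
      = fun z : ℝ × ℝ => fderiv ℝ (fun w : ℝ × ℝ => f w.1 w.2) z (1, 0) := by
    funext z
    exact aux_pt_eq hf z.1 z.2
  rw [this]
  exact (hf.continuous_fderiv one_ne_zero).clm_apply continuous_const

lemma aux_cont_slice (hf : ContDiff ℝ 1 (fun z : ℝ × ℝ => f z.1 z.2)) (t : ℝ) :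
    ContDiff ℝ 1 (fun y => f t y) :=
  hf.comp (contDiff_const.prodMk contDiff_id)

/-- Differentiation under the interval integral for `C¹` integrands. -/
lemma aux_hasDerivAt_param (hf : ContDiff ℝ 1 (fun z : ℝ × ℝ => f z.1 z.2)) (a b t₀ : ℝ) :
    HasDerivAt (fun t => ∫ y in a..b, f t y) (∫ y in a..b, pt f t₀ y) t₀ := by
  set G : ℝ → ℝ → ℝ := fun t y => fderiv ℝ (fun z : ℝ × ℝ => f z.1 z.2) (t, y) (1, 0) with hG
  have hGc : Continuous fun z : ℝ × ℝ => G z.1 z.2 :=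
    (hf.continuous_fderiv one_ne_zero).clm_apply continuous_const
  have hK : IsCompact (Metric.closedBall t₀ 1 ×ˢ uIcc a b) :=
    (isCompact_closedBall _ _).prod isCompact_uIcc
  obtain ⟨C, hC⟩ := hK.exists_bound_of_continuousOn hGc.continuousOn
  have key := intervalIntegral.hasDerivAt_integral_of_dominated_loc_of_deriv_le
    (F := fun t y => f t y) (F' := G) (x₀ := t₀) (bound := fun _ => C)
    (a := a) (b := b) (μ := volume) (s := Metric.ball t₀ 1) (Metric.ball_mem_nhds t₀ one_pos)
    (Filter.Eventually.of_forall fun x =>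
      ((hf.continuous.comp (continuous_const.prodMk continuous_id)).aestronglyMeasurable))
    ((hf.continuous.comp (continuous_const.prodMk continuous_id)).intervalIntegrable a b)
    ((hGc.comp (continuous_const.prodMk continuous_id)).aestronglyMeasurable)
    (Filter.Eventually.of_forall fun y hy x hx =>
      hC (x, y) ⟨Metric.ball_subset_closedBall hx, uIoc_subset_uIcc hy⟩)
    (intervalIntegrable_const)
    (Filter.Eventually.of_forall fun y _ x _ => aux_hasDerivAt_pt hf x y)
  have h2 := key.2
  have : (∫ y in a..b, G t₀ y) = ∫ y in a..b, pt f t₀ y := by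
    apply intervalIntegral.integral_congr
    intro y _
    exact (aux_pt_eq hf t₀ y).symm
  rwa [this] at h2

/-- FTC for the space derivative of a `C¹` function. -/
lemma aux_ftc (hf : ContDiff ℝ 1 (fun z : ℝ × ℝ => f z.1 z.2)) (t a b : ℝ) :
    ∫ y in a..b, px f t y = f t b - f t a := by
  have hgt : ContDiff ℝ 1 (fun y => f t y) := aux_cont_slice hf t
  have h1 : ∀ y ∈ uIcc a b, DifferentiableAt ℝ (fun y => f t y) y :=
    fun y _ => (hgt.differentiable one_ne_zero).differentiableAt
  have h2 : IntervalIntegrable (deriv fun y => f t y) volume a b :=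
    (hgt.continuous_deriv le_rfl).intervalIntegrable a b
  exact intervalIntegral.integral_deriv_eq_sub h1 h2

lemma aux_px_cont (hf : ContDiff ℝ 1 (fun z : ℝ × ℝ => f z.1 z.2)) (t : ℝ) :
    Continuous (fun y => px f t y) :=
  (aux_cont_slice hf t).continuous_deriv le_rfl

lemma aux_telescope (N : ℕ) (F : ℕ → ℝ → ℝ) (x : ℕ → ℝ) :
    ∑ i ∈ Finset.range (N + 1), (F i (x (i + 1)) - F i (x i))
      = (∑ j ∈ Finset.Ico 1 (N + 1), (F (j - 1) (x j) - F j (x j)))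
        + F N (x (N + 1)) - F 0 (x 0) := by
  induction N with
  | zero => simp
  | succ n ih =>
    rw [Finset.sum_range_succ, ih, Finset.sum_Ico_succ_top (by omega : 1 ≤ n + 1)]
    simp only [Nat.add_sub_cancel]
    ring

end Aux

/-- Mass conservation for the spatially semidiscrete DG scheme for the NSK
system on a partition `0 = x₀ < ⋯ < x_M = 1`: if on each cell the functions
`ρᵢ, vᵢ` are `C¹`, the velocity vanishes at the boundary of `[0,1]`, and the DG
mass equation with central flux tested with `Ψ ≡ 1` holds for every
`t ∈ [0,T]`, then the total discrete mass `Σᵢ ∫ ρᵢ(t,·)` is constant on `[0,T]`. -/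
theorem dg_semidiscrete_mass_conservation
    (M : ℕ) (hM : 1 ≤ M) (xp : ℕ → ℝ)
    (hx0 : xp 0 = 0) (hxM : xp M = 1)
    (hx : ∀ i < M, xp i < xp (i + 1))
    (T : ℝ) (hT : 0 < T)
    (ρ v : ℕ → ℝ → ℝ → ℝ)  -- ρ i t x : cell i, time t, position x
    (hρ : ∀ i < M, ContDiff ℝ 1 (fun z : ℝ × ℝ => ρ i z.1 z.2))
    (hv : ∀ i < M, ContDiff ℝ 1 (fun z : ℝ × ℝ => v i z.1 z.2))
    -- boundary conditions
    (hbv : ∀ t ∈ Icc (0:ℝ) T, v 0 t 0 = 0 ∧ v (M - 1) t 1 = 0)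
    -- DG mass equation with central flux, tested with the constant 1
    (hDG : ∀ t ∈ Icc (0:ℝ) T,
      ∑ i ∈ Finset.range M, ∫ y in xp i..xp (i + 1),
          (pt (ρ i) t y + px (fun s z => ρ i s z * v i s z) t y)
        = ∑ j ∈ Finset.Ico 1 M,
            (ρ (j - 1) t (xp j) * v (j - 1) t (xp j)
              - ρ j t (xp j) * v j t (xp j))) :
    ∀ t ∈ Icc (0:ℝ) T,
      (∑ i ∈ Finset.range M, ∫ y in xp i..xp (i + 1), ρ i t y)
        = ∑ i ∈ Finset.range M, ∫ y in xp i..xp (i + 1), ρ i 0 y := by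
  -- the total mass
  set m : ℝ → ℝ := fun t => ∑ i ∈ Finset.range M, ∫ y in xp i..xp (i + 1), ρ i t y with hm
  -- products ρᵢvᵢ are C¹
  have hρv : ∀ i < M, ContDiff ℝ 1 (fun z : ℝ × ℝ => ρ i z.1 z.2 * v i z.1 z.2) :=
    fun i hi => (hρ i hi).mul (hv i hi)
  -- m has derivative Σᵢ ∫ ∂ₜρᵢ at each time
  have hderiv : ∀ t : ℝ,
      HasDerivAt m (∑ i ∈ Finset.range M, ∫ y in xp i..xp (i + 1), pt (ρ i) t y) t := by
    intro t
    apply HasDerivAt.fun_sum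
    intro i hi
    exact aux_hasDerivAt_param (hρ i (Finset.mem_range.mp hi)) _ _ t
  -- for t ∈ [0,T], the derivative vanishes
  have hzero : ∀ t ∈ Icc (0:ℝ) T,
      (∑ i ∈ Finset.range M, ∫ y in xp i..xp (i + 1), pt (ρ i) t y) = 0 := by
    intro t ht
    have hDGt := hDG t ht
    -- split the integrals
    have hsplit : ∀ i ∈ Finset.range M,
        (∫ y in xp i..xp (i + 1),
            (pt (ρ i) t y + px (fun s z => ρ i s z * v i s z) t y))
          = (∫ y in xp i..xp (i + 1), pt (ρ i) t y)
            + ∫ y in xp i..xp (i + 1), px (fun s z => ρ i s z * v i s z) t y := by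
      intro i hi
      have hi' := Finset.mem_range.mp hi
      exact intervalIntegral.integral_add
        (((aux_pt_cont (hρ i hi')).comp (continuous_const.prodMk continuous_id)).intervalIntegrable _ _)
        ((aux_px_cont (hρv i hi') t).intervalIntegrable _ _)
    rw [Finset.sum_congr rfl hsplit, Finset.sum_add_distrib] at hDGt
    -- FTC on each cell
    have hftc : ∀ i ∈ Finset.range M,
        (∫ y in xp i..xp (i + 1), px (fun s z => ρ i s z * v i s z) t y)
          = ρ i t (xp (i + 1)) * v i t (xp (i + 1)) - ρ i t (xp i) * v i t (xp i) := by
      intro i hi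
      exact aux_ftc (hρv i (Finset.mem_range.mp hi)) t _ _
    rw [Finset.sum_congr rfl hftc] at hDGt
    -- telescoping
    obtain ⟨N, rfl⟩ : ∃ N, M = N + 1 := ⟨M - 1, (Nat.succ_pred_eq_of_pos hM).symm⟩
    have htel := aux_telescope N (fun i y => ρ i t y * v i t y) xp
    rw [htel] at hDGt
    have hb1 : v 0 t (xp 0) = 0 := by rw [hx0]; exact (hbv t ht).1
    have hb2 : v N t (xp (N + 1)) = 0 := by
      rw [hxM]
      simpa using (hbv t ht).2
    rw [hb1, hb2] at hDGt
    linarith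
  -- constancy on [0,T]
  have hconst : ∀ t ∈ Icc (0:ℝ) T, m t = m 0 := by
    apply constant_of_has_deriv_right_zero
    · intro t _
      exact (hderiv t).continuousAt.continuousWithinAt
    · intro t ht
      have h0 := hzero t (Ico_subset_Icc_self ht)
      have := hderiv t
      rw [h0] at this
      exact this.hasDerivWithinAt
  intro t ht
  exact hconst t ht
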